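/- Let F be a field, V ⊆ F^m a subspace, and t a positive integer. Then d_V(t) + D_V(t) ≥ 2·dim V. -/

import Mathlib

/-- A matrix is `t`-row-sparse if every row has at most `t` nonzero entries. -/
def RowSparse {F : Type*} [Field F] {m k : ℕ} (t : ℕ) (Q : Matrix (Fin m) (Fin k) F) : Prop :=
  ∀ i, {j | Q i j ≠ 0}.ncard ≤ t

/-- A subspace of `F^m` is `t`-sparse if it is the column space of some `t`-row-sparse
matrix with `m` rows. -/
def IsSparseSubspace {F : Type*} [Field F] {m : ℕ} (t : ℕ)
    (U : Submodule F (Fin m → F)) : Prop :=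
  ∃ (k : ℕ) (Q : Matrix (Fin m) (Fin k) F),
    RowSparse t Q ∧ U = LinearMap.range Q.mulVecLin

/-- The inner dimension `d_V(t)`: the maximum of `dim (V ⊓ U)` over `t`-sparse subspaces
`U` with `dim U ≤ dim V`. -/
noncomputable def innerDim {F : Type*} [Field F] {m : ℕ} (t : ℕ)
    (V : Submodule F (Fin m → F)) : ℕ :=
  sSup {d | ∃ U : Submodule F (Fin m → F), IsSparseSubspace t U ∧
    Module.finrank F U ≤ Module.finrank F V ∧ d = Module.finrank F ↥(V ⊓ U)}

/-- The outer dimension `D_V(t)`: the minimum dimension of a `t`-sparse subspace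
containing `V`. -/
noncomputable def outerDim {F : Type*} [Field F] {m : ℕ} (t : ℕ)
    (V : Submodule F (Fin m → F)) : ℕ :=
  sInf {d | ∃ U : Submodule F (Fin m → F),
    IsSparseSubspace t U ∧ V ≤ U ∧ d = Module.finrank F U}

open Matrix in
/-- Paturi–Pudlák: `d_V(t) + D_V(t) ≥ 2 dim V`. -/
theorem innerDim_add_outerDim_ge {F : Type*} [Field F] {m : ℕ}
    (V : Submodule F (Fin m → F)) (t : ℕ) (ht : 0 < t) :
    2 * Module.finrank F V ≤ innerDim t V + outerDim t V := by
  classical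
  set n := Module.finrank F V with hn
  -- the outer set is nonempty
  have hne : {d | ∃ U : Submodule F (Fin m → F),
      IsSparseSubspace t U ∧ V ≤ U ∧ d = Module.finrank F U}.Nonempty := by
    refine ⟨Module.finrank F (⊤ : Submodule F (Fin m → F)), ⊤, ⟨m, 1, ?_, ?_⟩, le_top, rfl⟩
    · intro i
      have : {j | (1 : Matrix (Fin m) (Fin m) F) i j ≠ 0} = {i} := by
        ext j
        simp only [Set.mem_setOf_eq, Matrix.one_apply, Set.mem_singleton_iff]
        by_cases h : i = j <;> simp [h, eq_comm]
      rw [this]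
      rw [Set.ncard_singleton]
      exact ht
    · rw [Matrix.mulVecLin_one]
      simp
  obtain ⟨U₀, hU₀sp, hVU₀, hD⟩ := Nat.sInf_mem hne
  obtain ⟨k, Q, hQ, hU₀⟩ := hU₀sp
  have hU₀span : U₀ = Submodule.span F (Set.range Qᵀ) := by
    rw [hU₀, Matrix.range_mulVecLin]
    rfl
  obtain ⟨b, hbs, hbspan, hbind⟩ := exists_linearIndependent F (Set.range Qᵀ)
  have hbfin : b.Finite := (Set.finite_range Qᵀ).subset hbs
  have hbU₀ : Submodule.span F b = U₀ := by rw [hbspan, hU₀span]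
  have hncard_b : b.ncard = Module.finrank F U₀ := by
    haveI : Fintype b := hbfin.fintype
    rw [← hbU₀, finrank_span_set_eq_card hbind, Set.ncard_eq_toFinset_card']
  have hnD : n ≤ Module.finrank F U₀ := Submodule.finrank_mono hVU₀
  obtain ⟨c, hcb, hcn⟩ := Set.exists_subset_card_eq (hncard_b ▸ hnD)
  have hcfin : c.Finite := hbfin.subset hcb
  haveI : Fintype c := hcfin.fintype
  have hcind : LinearIndependent F ((↑) : c → (Fin m → F)) := LinearIndepOn.mono (v := id) hbind hcb
  set W := Submodule.span F c with hW
  have hWrank : Module.finrank F W = n := by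
    rw [hW, finrank_span_set_eq_card hcind, ← Set.ncard_eq_toFinset_card', hcn]
  have hWU₀ : W ≤ U₀ := by
    rw [← hbU₀]
    exact Submodule.span_mono hcb
  -- build a sparse matrix for W
  have hcard : Fintype.card c = n := by
    rw [← Set.toFinset_card, ← Set.ncard_eq_toFinset_card', hcn]
  let e : Fin n ≃ c := (Fintype.equivFinOfCardEq hcard).symm
  have hcs : ∀ v : c, (v : Fin m → F) ∈ Set.range Qᵀ := fun v => hbs (hcb v.2)
  choose ι hι using hcs
  have hιinj : Function.Injective ι := by
    intro v w h
    apply Subtype.ext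
    rw [← hι v, ← hι w, h]
  let Q' : Matrix (Fin m) (Fin n) F := fun i j => Q i (ι (e j))
  have hQ't : ∀ j, Q'ᵀ j = ((e j : c) : Fin m → F) := by
    intro j
    funext i
    have := congrFun (hι (e j)) i
    exact this
  have hQ'range : Set.range Q'ᵀ = c := by
    ext v
    constructor
    · rintro ⟨j, rfl⟩
      rw [hQ't j]
      exact (e j).2
    · intro hv
      exact ⟨e.symm ⟨v, hv⟩, by rw [hQ't, Equiv.apply_symm_apply]⟩
  have hQ'sparse : RowSparse t Q' := by
    intro i
    refine le_trans ?_ (hQ i)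
    apply Set.ncard_le_ncard_of_injOn (fun j => ι (e j))
    · intro j hj
      exact hj
    · exact fun a _ b _ hab => e.injective (hιinj hab)
  have hWsp : IsSparseSubspace t W := by
    refine ⟨n, Q', hQ'sparse, ?_⟩
    rw [Matrix.range_mulVecLin, show Set.range Q'.col = Set.range Q'ᵀ from rfl, hQ'range]
  -- dimension counting
  have hsum : Module.finrank F ↥(V ⊔ W) + Module.finrank F ↥(V ⊓ W)
      = Module.finrank F V + Module.finrank F W :=
    Submodule.finrank_sup_add_finrank_inf_eq V W
  have hsup : Module.finrank F ↥(V ⊔ W) ≤ Module.finrank F U₀ :=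
    Submodule.finrank_mono (sup_le hVU₀ hWU₀)
  -- inner dim bound
  have hmem : Module.finrank F ↥(V ⊓ W) ∈ {d | ∃ U : Submodule F (Fin m → F),
      IsSparseSubspace t U ∧ Module.finrank F U ≤ Module.finrank F V ∧
      d = Module.finrank F ↥(V ⊓ U)} :=
    ⟨W, hWsp, by rw [hWrank], rfl⟩
  have hbdd : BddAbove {d | ∃ U : Submodule F (Fin m → F),
      IsSparseSubspace t U ∧ Module.finrank F U ≤ Module.finrank F V ∧
      d = Module.finrank F ↥(V ⊓ U)} := by
    refine ⟨n, ?_⟩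
    rintro d ⟨U, -, -, rfl⟩
    exact Submodule.finrank_mono inf_le_left
  have hinner : Module.finrank F ↥(V ⊓ W) ≤ innerDim t V := le_csSup hbdd hmem
  have houter : outerDim t V = Module.finrank F U₀ := hD
  omega
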